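/- Let n be not coprime to p and let C = ⟨A₁,…,A_{2k}⟩ be a cyclic code of length n over R = F_p[u,v]/⟨u^k, v², uv−vu⟩ with torsion code C_{2k} = {f ∈ F_p[x]/⟨xⁿ−1⟩ : u^{k−1}v f ∈ C}. Then the minimum Hamming weight of C equals the minimum Hamming weight of the F_p-cyclic code C_{2k}. -/

import Mathlib

set_option synthInstance.maxHeartbeats 1000000

open Polynomial

/-- The ring `F_p[u,v]/⟨u^k, v²⟩` (the variables commute, so `uv - vu = 0` is automatic). -/
abbrev Rbase (p k : ℕ) : Type :=
  MvPolynomial (Fin 2) (ZMod p) ⧸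
    Ideal.span {(MvPolynomial.X 0 : MvPolynomial (Fin 2) (ZMod p)) ^ k, MvPolynomial.X 1 ^ 2}

/-- The image of `u`. -/
noncomputable def uu (p k : ℕ) : Rbase p k := Ideal.Quotient.mk _ (MvPolynomial.X 0)

/-- The image of `v`. -/
noncomputable def vv (p k : ℕ) : Rbase p k := Ideal.Quotient.mk _ (MvPolynomial.X 1)

instance Rbase.polyIdealIsTwoSided (p k : ℕ) (I : Ideal (Polynomial (Rbase p k))) :
    I.IsTwoSided :=
  @Ideal.instIsTwoSided _ Polynomial.commSemiring I

/-- `R_n = (F_p[u,v]/⟨u^k,v²⟩)[x]/⟨xⁿ−1⟩`, the ambient ring of cyclic codes of length `n`. -/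
abbrev Rn (p k n : ℕ) : Type :=
  Polynomial (Rbase p k) ⧸
    Ideal.span {(Polynomial.X : Polynomial (Rbase p k)) ^ n - 1}

noncomputable def uR (p k n : ℕ) : Rn p k n := Ideal.Quotient.mk _ (Polynomial.C (uu p k))
noncomputable def vR (p k n : ℕ) : Rn p k n := Ideal.Quotient.mk _ (Polynomial.C (vv p k))
noncomputable def xR (p k n : ℕ) : Rn p k n := Ideal.Quotient.mk _ Polynomial.X

/-- The canonical map `F_p[x] → R_n` (coefficientwise inclusion followed by the quotient map). -/
noncomputable def theta (p k n : ℕ) : Polynomial (ZMod p) →+* Rn p k n :=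
  (Ideal.Quotient.mk _).comp (Polynomial.mapRingHom (algebraMap (ZMod p) (Rbase p k)))

/-- The set of `f ∈ F_p[x]` representing elements of
`C_i = Tor Res … Res (C) = {f : u^{i-1}·f ∈ C mod ⟨u^i, v⟩}`. -/
def resTorSet (p k n : ℕ) (C : Ideal (Rn p k n)) (i : ℕ) : Set (Polynomial (ZMod p)) :=
  {f | uR p k n ^ (i - 1) * theta p k n f ∈
        C ⊔ Ideal.span {uR p k n ^ i, vR p k n}}

/-- The set of `f ∈ F_p[x]` representing elements of
`C_{k+i} = Tor Res … Res Tor (C) = {f : u^{i-1}·v·f ∈ C mod ⟨u^i v⟩}`. -/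
def torTorSet (p k n : ℕ) (C : Ideal (Rn p k n)) (i : ℕ) : Set (Polynomial (ZMod p)) :=
  {f | uR p k n ^ (i - 1) * vR p k n * theta p k n f ∈
        C ⊔ Ideal.span {uR p k n ^ i * vR p k n}}

/-- `g` is the (monic, minimal-degree) generator of the ideal of `F_p[x]/⟨xⁿ−1⟩` whose set
of polynomial representatives is `S`. -/
def IsMinGen (p n : ℕ) (S : Set (Polynomial (ZMod p))) (g : Polynomial (ZMod p)) : Prop :=
  g.Monic ∧
  S = {f | ∃ a b : Polynomial (ZMod p), f = g * a + (Polynomial.X ^ n - 1) * b} ∧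
  ∀ f ∈ S, f ≠ 0 → g.degree ≤ f.degree

/-- The canonical generator
`A_i = u^{i-1}g_i + u^i g_{ii} + ⋯ + u^{k-1}g_{i(k-1)} + v(g_{ik} + ⋯ + u^{k-1}g_{i(2k-1)})`
as a polynomial over `F_p[u,v]/⟨u^k,v²⟩`, for `1 ≤ i ≤ k`. -/
noncomputable def Apoly (p k : ℕ) (g : ℕ → Polynomial (ZMod p))
    (gg : ℕ → ℕ → Polynomial (ZMod p)) (i : ℕ) : Polynomial (Rbase p k) :=
  Polynomial.C (uu p k ^ (i - 1)) * (g i).map (algebraMap (ZMod p) (Rbase p k))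
    + ∑ j ∈ Finset.Icc i (k - 1),
        Polynomial.C (uu p k ^ j) * (gg i j).map (algebraMap (ZMod p) (Rbase p k))
    + Polynomial.C (vv p k) *
        ∑ j ∈ Finset.Icc k (2 * k - 1),
          Polynomial.C (uu p k ^ (j - k)) * (gg i j).map (algebraMap (ZMod p) (Rbase p k))

/-- The canonical generator
`A_{k+i} = v(u^{i-1}g_{k+i} + u^i g_{(k+i)(k+i)} + ⋯ + u^{k-1}g_{(k+i)(2k-1)})`
as a polynomial over `F_p[u,v]/⟨u^k,v²⟩`, for `1 ≤ i ≤ k`. -/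
noncomputable def AVpoly (p k : ℕ) (g : ℕ → Polynomial (ZMod p))
    (gg : ℕ → ℕ → Polynomial (ZMod p)) (i : ℕ) : Polynomial (Rbase p k) :=
  Polynomial.C (vv p k) *
    (Polynomial.C (uu p k ^ (i - 1)) * (g (k + i)).map (algebraMap (ZMod p) (Rbase p k))
      + ∑ j ∈ Finset.Icc (k + i) (2 * k - 1),
          Polynomial.C (uu p k ^ (j - k)) * (gg (k + i) j).map (algebraMap (ZMod p) (Rbase p k)))

/-- `A_i` as an element of `R_n`. -/
noncomputable def Aelt (p k n : ℕ) (g : ℕ → Polynomial (ZMod p))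
    (gg : ℕ → ℕ → Polynomial (ZMod p)) (i : ℕ) : Rn p k n :=
  Ideal.Quotient.mk _ (Apoly p k g gg i)

/-- `A_{k+i}` as an element of `R_n`. -/
noncomputable def AVelt (p k n : ℕ) (g : ℕ → Polynomial (ZMod p))
    (gg : ℕ → ℕ → Polynomial (ZMod p)) (i : ℕ) : Rn p k n :=
  Ideal.Quotient.mk _ (AVpoly p k g gg i)

/-- The minimum Hamming weight of a nonzero codeword of `C ⊆ R_n` (weights are computed
on the unique representative of degree `< n`). -/
noncomputable def dHam (p k n : ℕ) (C : Ideal (Rn p k n)) : ℕ :=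
  sInf {m | ∃ f : Polynomial (Rbase p k), f ≠ 0 ∧ f.degree < (n : ℕ) ∧
    Ideal.Quotient.mk (Ideal.span {(Polynomial.X : Polynomial (Rbase p k)) ^ n - 1}) f ∈ C ∧
    m = f.support.card}

/-- The minimum Hamming weight of a nonzero codeword of a cyclic code over `F_p` given by a
set `S` of polynomial representatives (closed under adding multiples of `xⁿ−1`). -/
noncomputable def dHamF (p n : ℕ) (S : Set (Polynomial (ZMod p))) : ℕ :=
  sInf {m | ∃ f : Polynomial (ZMod p), f ≠ 0 ∧ f.degree < (n : ℕ) ∧ f ∈ S ∧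
    m = f.support.card}

noncomputable def wB (p k : ℕ) : Rbase p k := uu p k ^ (k-1) * vv p k

lemma mk_zero_iff (p k : ℕ) (P : MvPolynomial (Fin 2) (ZMod p)) :
    (Ideal.Quotient.mk (Ideal.span {(MvPolynomial.X 0 : MvPolynomial (Fin 2) (ZMod p)) ^ k,
        MvPolynomial.X 1 ^ 2}) P = 0)
    ↔ ∀ m ∈ P.support, k ≤ m 0 ∨ 2 ≤ m 1 := by
  rw [Ideal.Quotient.eq_zero_iff_mem]
  have himg : ({(MvPolynomial.X 0 : MvPolynomial (Fin 2) (ZMod p)) ^ k, MvPolynomial.X 1 ^ 2} : Set _)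
      = (fun s => MvPolynomial.monomial s (1 : ZMod p)) ''
          {Finsupp.single (0 : Fin 2) k, Finsupp.single (1 : Fin 2) 2} := by
    rw [Set.image_pair]
    simp [MvPolynomial.X_pow_eq_monomial]
  rw [himg, MvPolynomial.mem_ideal_span_monomial_image]
  simp [Finsupp.single_le_iff]

lemma algMul_wB (p k : ℕ) (c : ZMod p) :
    algebraMap (ZMod p) (Rbase p k) c * wB p k
      = Ideal.Quotient.mk _ (MvPolynomial.monomial
          (Finsupp.single (0 : Fin 2) (k-1) + Finsupp.single (1 : Fin 2) 1) c) := by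
  have halg : algebraMap (ZMod p) (Rbase p k) c = Ideal.Quotient.mk _ (MvPolynomial.C c) := by
    rw [← Ideal.Quotient.mk_algebraMap, MvPolynomial.algebraMap_eq]
  rw [wB, uu, vv, halg, ← map_pow, ← map_mul, ← map_mul]
  congr 1
  rw [MvPolynomial.C_apply, MvPolynomial.X_pow_eq_monomial,
    ← pow_one (MvPolynomial.X (1 : Fin 2)), MvPolynomial.X_pow_eq_monomial,
    MvPolynomial.monomial_mul, MvPolynomial.monomial_mul]
  simp

lemma wB_smul_ne (p k : ℕ) [Fact p.Prime] (hk : 0 < k) (c : ZMod p)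
    (h : algebraMap (ZMod p) (Rbase p k) c * wB p k = 0) : c = 0 := by
  by_contra hc
  rw [algMul_wB, mk_zero_iff] at h
  have hm := h (Finsupp.single (0 : Fin 2) (k-1) + Finsupp.single (1 : Fin 2) 1)
    (by rw [MvPolynomial.support_monomial, if_neg hc]; simp)
  have hm' : k ≤ k - 1 ∨ 2 ≤ 1 := by simpa [Finsupp.single_apply] using hm
  omega

lemma uu_pow_k (p k : ℕ) : uu p k ^ k = 0 := by
  rw [uu, ← map_pow, Ideal.Quotient.eq_zero_iff_mem]
  exact Ideal.subset_span (by simp)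

lemma vv_sq (p k : ℕ) : vv p k * vv p k = 0 := by
  rw [vv, ← map_mul, Ideal.Quotient.eq_zero_iff_mem, ← sq]
  exact Ideal.subset_span (by simp)

lemma ann_eq (p k : ℕ) [Fact p.Prime] (hk : 0 < k) (r : Rbase p k)
    (h1 : uu p k * r = 0) (h2 : vv p k * r = 0) :
    ∃ c : ZMod p, r = algebraMap (ZMod p) (Rbase p k) c * wB p k := by
  obtain ⟨P, rfl⟩ := Ideal.Quotient.mk_surjective r
  rw [uu, ← map_mul, mk_zero_iff] at h1
  rw [vv, ← map_mul, mk_zero_iff] at h2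
  have h1' : ∀ m ∈ P.support, k ≤ 1 + m 0 ∨ 2 ≤ m 1 := by
    intro m hm
    have hmem : (Finsupp.single (0 : Fin 2) 1 + m) ∈ (MvPolynomial.X 0 * P).support := by
      rw [MvPolynomial.mem_support_iff, MvPolynomial.coeff_X_mul]
      exact MvPolynomial.mem_support_iff.mp hm
    have := h1 _ hmem
    simpa [Finsupp.single_apply] using this
  have h2' : ∀ m ∈ P.support, k ≤ m 0 ∨ 1 ≤ m 1 := by
    intro m hm
    have hmem : (Finsupp.single (1 : Fin 2) 1 + m) ∈ (MvPolynomial.X 1 * P).support := by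
      rw [MvPolynomial.mem_support_iff, MvPolynomial.coeff_X_mul]
      exact MvPolynomial.mem_support_iff.mp hm
    have h' : k ≤ m 0 ∨ 2 ≤ 1 + m 1 := by simpa [Finsupp.single_apply] using h2 _ hmem
    omega
  set mstar : Fin 2 →₀ ℕ := Finsupp.single (0 : Fin 2) (k-1) + Finsupp.single (1 : Fin 2) 1
    with hmstar
  have estar0 : mstar 0 = k - 1 := by
    rw [hmstar, Finsupp.add_apply]; simp [Finsupp.single_apply]
  have estar1 : mstar 1 = 1 := by
    rw [hmstar, Finsupp.add_apply]; simp [Finsupp.single_apply]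
  refine ⟨MvPolynomial.coeff mstar P, ?_⟩
  rw [algMul_wB]
  have hsub : Ideal.Quotient.mk _ (P - MvPolynomial.monomial mstar (MvPolynomial.coeff mstar P))
      = (0 : Rbase p k) := by
    rw [mk_zero_iff]
    intro m hm
    have hmP : MvPolynomial.coeff m (P - MvPolynomial.monomial mstar (MvPolynomial.coeff mstar P)) ≠ 0 :=
      MvPolynomial.mem_support_iff.mp hm
    rw [MvPolynomial.coeff_sub, MvPolynomial.coeff_monomial] at hmP
    by_cases hms : mstar = m
    · rw [if_pos hms, hms, sub_self] at hmP; exact absurd rfl hmP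
    · rw [if_neg hms, sub_zero] at hmP
      have hmsup : m ∈ P.support := MvPolynomial.mem_support_iff.mpr hmP
      have d1 := h1' m hmsup
      have d2 := h2' m hmsup
      by_cases hy : 2 ≤ m 1
      · exact Or.inr hy
      · left
        by_cases hx : k ≤ m 0
        · exact hx
        · exfalso
          have hm1 : m 1 = 1 := by omega
          have hm0 : m 0 = k - 1 := by omega
          apply hms
          ext i
          fin_cases i
          · show mstar 0 = m 0
            rw [estar0, hm0]
          · show mstar 1 = m 1
            rw [estar1, hm1]
  rw [map_sub, sub_eq_zero] at hsub
  exact hsub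

noncomputable def ext_c (p k : ℕ) (r : Rbase p k) : ZMod p :=
  Classical.epsilon fun c => r = algebraMap (ZMod p) (Rbase p k) c * wB p k

lemma ext_c_spec (p k : ℕ) [Fact p.Prime] (hk : 0 < k) (r : Rbase p k)
    (h1 : uu p k * r = 0) (h2 : vv p k * r = 0) :
    r = algebraMap (ZMod p) (Rbase p k) (ext_c p k r) * wB p k :=
  Classical.epsilon_spec (ann_eq p k hk r h1 h2)

lemma ext_c_zero (p k : ℕ) [Fact p.Prime] (hk : 0 < k) : ext_c p k 0 = 0 := by
  have h : (0 : Rbase p k) = algebraMap (ZMod p) (Rbase p k) (ext_c p k 0) * wB p k :=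
    Classical.epsilon_spec (⟨0, by simp⟩ : ∃ c : ZMod p,
      (0 : Rbase p k) = algebraMap (ZMod p) (Rbase p k) c * wB p k)
  exact wB_smul_ne p k hk _ h.symm

noncomputable def WP (p k : ℕ) (f : Polynomial (ZMod p)) : Polynomial (Rbase p k) :=
  Polynomial.C (wB p k) * f.map (algebraMap (ZMod p) (Rbase p k))

lemma WP_coeff (p k : ℕ) (f : Polynomial (ZMod p)) (j : ℕ) :
    (WP p k f).coeff j = algebraMap (ZMod p) (Rbase p k) (f.coeff j) * wB p k := by
  rw [WP, Polynomial.coeff_C_mul, Polynomial.coeff_map, mul_comm]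

lemma WP_support (p k : ℕ) [Fact p.Prime] (hk : 0 < k) (f : Polynomial (ZMod p)) :
    (WP p k f).support = f.support := by
  ext j
  simp only [Polynomial.mem_support_iff, WP_coeff]
  constructor
  · intro h hc
    exact h (by rw [hc, map_zero, zero_mul])
  · intro h hc
    exact h (wB_smul_ne p k hk _ hc)

lemma mk_WP (p k n : ℕ) (f : Polynomial (ZMod p)) :
    Ideal.Quotient.mk (Ideal.span {(Polynomial.X : Polynomial (Rbase p k)) ^ n - 1}) (WP p k f)
      = uR p k n ^ (k - 1) * vR p k n * theta p k n f := by
  rw [uR, vR, theta, RingHom.comp_apply, ← map_pow, ← map_mul, ← map_mul]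
  congr 1
  rw [WP, wB, Polynomial.C_mul, Polynomial.C_pow]
  rfl

lemma uR_pow_k (p k n : ℕ) : uR p k n ^ k = 0 := by
  rw [uR, ← map_pow, ← Polynomial.C_pow, uu_pow_k, Polynomial.C_0, map_zero]

lemma sup_collapse (p k n : ℕ) (C : Ideal (Rn p k n)) :
    C ⊔ Ideal.span {uR p k n ^ k * vR p k n} = C := by
  rw [uR_pow_k, zero_mul, Ideal.span_singleton_eq_bot.mpr rfl, sup_bot_eq]

lemma dirB (p k n : ℕ) [Fact p.Prime] (hk : 0 < k) (C : Ideal (Rn p k n))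
    (f : Polynomial (ZMod p)) (hf : f ∈ torTorSet p k n C k) (hf0 : f ≠ 0)
    (hfd : f.degree < (n : ℕ)) :
    ∃ F : Polynomial (Rbase p k), F ≠ 0 ∧ F.degree < (n : ℕ) ∧
      Ideal.Quotient.mk (Ideal.span {(Polynomial.X : Polynomial (Rbase p k)) ^ n - 1}) F ∈ C ∧
      F.support.card = f.support.card := by
  have hsub : (WP p k f).support ⊆ f.support := by
    rw [WP_support p k hk]
  refine ⟨WP p k f, ?_, ?_, ?_, by rw [WP_support p k hk]⟩
  · intro h
    apply hf0
    rw [← Polynomial.support_eq_empty, ← WP_support p k hk, h, Polynomial.support_zero]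
  · exact lt_of_le_of_lt (Polynomial.degree_mono hsub) hfd
  · have hmemb : uR p k n ^ (k - 1) * vR p k n * theta p k n f ∈
        C ⊔ Ideal.span {uR p k n ^ k * vR p k n} := hf
    rw [sup_collapse] at hmemb
    rw [mk_WP]
    exact hmemb

lemma dirA (p k n : ℕ) [Fact p.Prime] (hk : 0 < k) (C : Ideal (Rn p k n))
    (F : Polynomial (Rbase p k)) (hF0 : F ≠ 0)
    (hFC : Ideal.Quotient.mk (Ideal.span {(Polynomial.X : Polynomial (Rbase p k)) ^ n - 1}) F ∈ C) :
    ∃ f : Polynomial (ZMod p), f ≠ 0 ∧ f.degree ≤ F.degree ∧ f ∈ torTorSet p k n C k ∧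
      f.support.card ≤ F.support.card := by
  classical
  obtain ⟨G, hG0, hvG, hGsupp, hGC⟩ :
      ∃ G : Polynomial (Rbase p k), G ≠ 0 ∧ (∀ j, vv p k * G.coeff j = 0) ∧
        G.support ⊆ F.support ∧
        Ideal.Quotient.mk (Ideal.span {(Polynomial.X : Polynomial (Rbase p k)) ^ n - 1}) G ∈ C := by
    by_cases hv : Polynomial.C (vv p k) * F = 0
    · refine ⟨F, hF0, fun j => ?_, subset_rfl, hFC⟩
      have := congrArg (fun q => Polynomial.coeff q j) hv
      simpa [Polynomial.coeff_C_mul] using this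
    · refine ⟨Polynomial.C (vv p k) * F, hv, fun j => ?_, fun j hj => ?_, ?_⟩
      · rw [Polynomial.coeff_C_mul, ← mul_assoc, vv_sq, zero_mul]
      · rw [Polynomial.mem_support_iff] at hj ⊢
        intro h0
        exact hj (by rw [Polynomial.coeff_C_mul, h0, mul_zero])
      · rw [map_mul]
        exact Ideal.mul_mem_left _ _ hFC
  have hQk : Polynomial.C (uu p k) ^ k * G = 0 := by
    rw [← Polynomial.C_pow, uu_pow_k, Polynomial.C_0, zero_mul]
  have hex : ∃ a, Polynomial.C (uu p k) ^ a * G = 0 := ⟨k, hQk⟩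
  have hN0 : Nat.find hex ≠ 0 := by
    intro h
    have := Nat.find_spec hex
    rw [h, pow_zero, one_mul] at this
    exact hG0 this
  set a := Nat.find hex - 1 with ha
  set H := Polynomial.C (uu p k) ^ a * G with hHdef
  have hHne : H ≠ 0 := Nat.find_min hex (by omega)
  have hH1 : Polynomial.C (uu p k) ^ (a + 1) * G = 0 := by
    have h1 : a + 1 = Nat.find hex := by omega
    rw [h1]
    exact Nat.find_spec hex
  have hHcoeff : ∀ j, H.coeff j = uu p k ^ a * G.coeff j := fun j => by
    rw [hHdef, ← Polynomial.C_pow, Polynomial.coeff_C_mul]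
  have hHu : ∀ j, uu p k * H.coeff j = 0 := by
    intro j
    have h2 := congrArg (fun q => Polynomial.coeff q j) hH1
    simp only [← Polynomial.C_pow, Polynomial.coeff_C_mul, Polynomial.coeff_zero] at h2
    rw [hHcoeff j, ← mul_assoc, ← pow_succ']
    exact h2
  have hHv : ∀ j, vv p k * H.coeff j = 0 := by
    intro j
    rw [hHcoeff j, mul_left_comm, hvG j, mul_zero]
  have hHsupp : H.support ⊆ G.support := by
    intro j hj
    rw [Polynomial.mem_support_iff] at hj ⊢
    intro h0
    exact hj (by rw [hHcoeff j, h0, mul_zero])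
  have hHC : Ideal.Quotient.mk
      (Ideal.span {(Polynomial.X : Polynomial (Rbase p k)) ^ n - 1}) H ∈ C := by
    rw [hHdef, map_mul]
    exact Ideal.mul_mem_left _ _ hGC
  set f : Polynomial (ZMod p) :=
    ∑ j ∈ H.support, Polynomial.monomial j (ext_c p k (H.coeff j)) with hfdef
  have hfcoeff : ∀ j, f.coeff j = ext_c p k (H.coeff j) := by
    intro j
    rw [hfdef, Polynomial.finset_sum_coeff]
    rw [Finset.sum_eq_single j (fun b _ hb => by rw [Polynomial.coeff_monomial, if_neg hb])
      (fun hj => by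
        rw [Polynomial.coeff_monomial, if_pos rfl, Polynomial.notMem_support_iff.mp hj,
          ext_c_zero p k hk])]
    rw [Polynomial.coeff_monomial, if_pos rfl]
  have hHW : ∀ j, H.coeff j = algebraMap (ZMod p) (Rbase p k) (f.coeff j) * wB p k := by
    intro j
    rw [hfcoeff j]
    exact ext_c_spec p k hk _ (hHu j) (hHv j)
  have hWPH : WP p k f = H := by
    apply Polynomial.ext
    intro j
    rw [WP_coeff, ← hHW j]
  have hsupp : f.support = H.support := by
    rw [← WP_support p k hk f, hWPH]
  have hf0 : f ≠ 0 := by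
    intro h
    apply hHne
    rw [← hWPH, h]
    simp [WP]
  refine ⟨f, hf0, ?_, ?_, ?_⟩
  · exact Polynomial.degree_mono (by rw [hsupp]; exact hHsupp.trans hGsupp)
  · show uR p k n ^ (k - 1) * vR p k n * theta p k n f ∈
      C ⊔ Ideal.span {uR p k n ^ k * vR p k n}
    rw [← mk_WP, hWPH]
    exact Ideal.mem_sup_left hHC
  · rw [hsupp]
    exact Finset.card_le_card (hHsupp.trans hGsupp)

/-- for `n` not coprime to `p` and a nonzero cyclic code `C` over
`F_p[u,v]/⟨u^k,v²,uv−vu⟩`, the minimum Hamming weight of `C` equals the minimum Hamming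
weight of the torsion code `C_{2k} = {f : u^{k−1}v·f ∈ C}` over `F_p`. -/
theorem stmt12 (p k n : ℕ) [Fact p.Prime] (hk : 0 < k) (hn : 0 < n)
    (hncop : ¬ Nat.Coprime n p)
    (C : Ideal (Rn p k n)) (hC : C ≠ ⊥) :
    dHam p k n C = dHamF p n (torTorSet p k n C k) := by
  classical
  haveI : Nontrivial (Rbase p k) := by
    refine ⟨1, 0, fun h10 => ?_⟩
    have hw : wB p k = 0 := by
      calc wB p k = wB p k * 1 := (mul_one _).symm
      _ = 0 := by rw [h10, mul_zero]
    exact one_ne_zero (wB_smul_ne p k hk 1 (by rw [map_one, one_mul, hw]))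
  have hmonic : ((Polynomial.X : Polynomial (Rbase p k)) ^ n - 1).Monic := by
    have h := Polynomial.monic_X_pow_sub_C (1 : Rbase p k) hn.ne'
    simpa using h
  have hdeg : ((Polynomial.X : Polynomial (Rbase p k)) ^ n - 1).degree = (n : ℕ) := by
    have h := Polynomial.degree_X_pow_sub_C hn (1 : Rbase p k)
    simpa using h
  obtain ⟨x, hxC, hx0⟩ := Submodule.exists_mem_ne_zero_of_ne_bot hC
  obtain ⟨P, rfl⟩ := Ideal.Quotient.mk_surjective x
  set q : Polynomial (Rbase p k) := Polynomial.X ^ n - 1 with hq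
  have hmkF : Ideal.Quotient.mk (Ideal.span {q}) (P %ₘ q) = Ideal.Quotient.mk _ P := by
    conv_rhs => rw [← Polynomial.modByMonic_add_div P q]
    rw [map_add]
    have h0 : Ideal.Quotient.mk (Ideal.span {q}) (q * (P /ₘ q)) = 0 := by
      rw [Ideal.Quotient.eq_zero_iff_mem]
      exact Ideal.mul_mem_right _ _ (Ideal.subset_span (Set.mem_singleton q))
    rw [h0, add_zero]
  have hF0 : P %ₘ q ≠ 0 := fun h => hx0 (by rw [← hmkF, h, map_zero])
  have hFdeg : (P %ₘ q).degree < (n : ℕ) := by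
    have h := Polynomial.degree_modByMonic_lt P hmonic
    rwa [hdeg] at h
  have hFC : Ideal.Quotient.mk (Ideal.span {q}) (P %ₘ q) ∈ C := by
    rw [hmkF]
    exact hxC
  rw [dHam, dHamF]
  have hS1ne : {m | ∃ F : Polynomial (Rbase p k), F ≠ 0 ∧ F.degree < (n : ℕ) ∧
      Ideal.Quotient.mk (Ideal.span {(Polynomial.X : Polynomial (Rbase p k)) ^ n - 1}) F ∈ C ∧
      m = F.support.card}.Nonempty :=
    ⟨(P %ₘ q).support.card, P %ₘ q, hF0, hFdeg, hFC, rfl⟩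
  obtain ⟨F, hFne, hFd, hFmem, hFcard⟩ := Nat.sInf_mem hS1ne
  obtain ⟨f, hf0, hfdle, hfmem, hfcard⟩ := dirA p k n hk C F hFne hFmem
  have hfd : f.degree < (n : ℕ) := lt_of_le_of_lt hfdle hFd
  have hS2mem : f.support.card ∈ {m | ∃ g : Polynomial (ZMod p), g ≠ 0 ∧ g.degree < (n : ℕ) ∧
      g ∈ torTorSet p k n C k ∧ m = g.support.card} := ⟨f, hf0, hfd, hfmem, rfl⟩
  apply le_antisymm
  · obtain ⟨g, hg0, hgd, hgmem, hgcard⟩ := Nat.sInf_mem ⟨_, hS2mem⟩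
    obtain ⟨F', hF'0, hF'd, hF'C, hF'card⟩ := dirB p k n hk C g hgmem hg0 hgd
    exact Nat.sInf_le ⟨F', hF'0, hF'd, hF'C, hgcard.trans hF'card.symm⟩
  · exact le_trans (Nat.sInf_le hS2mem) (hfcard.trans hFcard.ge)
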